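/- Let n ≥ 3 and k, d ≥ 1. If a subgroup Λ of SL(n,ℚ) contains the elementary matrix e_{n,1}(k) and contains e_{i,j}(d) for all 1 ≤ i < j ≤ n, then Λ contains e_{i,j}(k d²) for all 1 ≤ i ≠ j ≤ n. -/

import Mathlib

/-- The elementary matrix `e_{i,j}(t)` as an element of `SL(n, ℚ)`. -/
def ElemQ {n : ℕ} (i j : Fin n) (hij : i ≠ j) (t : ℚ) :
    Matrix.SpecialLinearGroup (Fin n) ℚ :=
  ⟨Matrix.transvection i j t, Matrix.det_transvection_of_ne i j hij t⟩

lemma ElemQ_mul {n : ℕ} {i j : Fin n} (h : i ≠ j) (s t : ℚ) :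
    ElemQ i j h s * ElemQ i j h t = ElemQ i j h (s + t) := by
  apply Subtype.ext
  exact Matrix.transvection_mul_transvection_same i j h s t

lemma ElemQ_pow {n : ℕ} {i j : Fin n} (h : i ≠ j) (t : ℚ) (m : ℕ) :
    ElemQ i j h t ^ m = ElemQ i j h (m * t) := by
  induction m with
  | zero =>
    apply Subtype.ext
    rw [pow_zero]; simp [ElemQ]
  | succ m ih =>
    rw [pow_succ, ih, ElemQ_mul]
    push_cast
    ring_nf

lemma ElemQ_inv {n : ℕ} {i j : Fin n} (h : i ≠ j) (t : ℚ) :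
    (ElemQ i j h t)⁻¹ = ElemQ i j h (-t) := by
  apply inv_eq_of_mul_eq_one_right
  apply Subtype.ext
  show Matrix.transvection i j t * Matrix.transvection i j (-t) = 1
  rw [Matrix.transvection_mul_transvection_same i j h]
  simp

lemma ElemQ_comm {n : ℕ} {a b c : Fin n} (hab : a ≠ b) (hbc : b ≠ c) (hac : a ≠ c)
    (s t : ℚ) :
    ElemQ a b hab s * ElemQ b c hbc t * (ElemQ a b hab s)⁻¹ * (ElemQ b c hbc t)⁻¹ =
      ElemQ a c hac (s * t) := by
  rw [ElemQ_inv, ElemQ_inv]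
  apply Subtype.ext
  show (Matrix.transvection a b s * Matrix.transvection b c t *
      Matrix.transvection a b (-s) * Matrix.transvection b c (-t)) = _
  simp only [Matrix.transvection, Matrix.add_mul, Matrix.mul_add, Matrix.one_mul,
    Matrix.mul_one, Matrix.single_mul_single_same,
    Matrix.single_mul_single_of_ne _ _ _ _ hab.symm,
    Matrix.single_mul_single_of_ne _ _ _ _ hbc.symm,
    Matrix.single_mul_single_of_ne _ _ _ _ hac.symm]
  show _ = 1 + Matrix.single a c (s * t)
  ext x y
  simp only [Matrix.add_apply, Matrix.zero_mul, Matrix.zero_apply,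
    Matrix.single, Matrix.of_apply, Matrix.one_apply]
  split_ifs <;> simp_all

/-- **Theorem.** Let `n ≥ 3` and `k, d ≥ 1`. If a subgroup `Λ` of `SL(n,ℚ)` contains
`e_{n,1}(k)` and `e_{i,j}(d)` for all `1 ≤ i < j ≤ n`, then `Λ` contains `e_{i,j}(kd²)`
for all `1 ≤ i ≠ j ≤ n`. -/
theorem stmt9 (n : ℕ) (hn : 3 ≤ n) (k d : ℤ) (hk : 1 ≤ k) (hd : 1 ≤ d)
    (Λ : Subgroup (Matrix.SpecialLinearGroup (Fin n) ℚ))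
    (h1 : ElemQ (⟨n - 1, by omega⟩ : Fin n) ⟨0, by omega⟩
        (Fin.ne_of_val_ne (by simp only [Fin.val_mk]; omega)) ((k : ℚ)) ∈ Λ)
    (h2 : ∀ i j : Fin n, (hij : i < j) → ElemQ i j (ne_of_lt hij) ((d : ℚ)) ∈ Λ) :
    ∀ i j : Fin n, (hij : i ≠ j) → ElemQ i j hij (((k * d ^ 2 : ℤ) : ℚ)) ∈ Λ := by
  have comm_mem : ∀ {a b c : Fin n} (hab : a ≠ b) (hbc : b ≠ c) (hac : a ≠ c) (s t : ℚ),
      ElemQ a b hab s ∈ Λ → ElemQ b c hbc t ∈ Λ → ElemQ a c hac (s * t) ∈ Λ := by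
    intro a b c hab hbc hac s t hA hB
    rw [← ElemQ_comm hab hbc hac]
    exact mul_mem (mul_mem (mul_mem hA hB) (inv_mem hA)) (inv_mem hB)
  have pow_mem' : ∀ {a b : Fin n} (hab : a ≠ b) (t : ℚ) (m : ℕ),
      ElemQ a b hab t ∈ Λ → ElemQ a b hab ((m : ℚ) * t) ∈ Λ := by
    intro a b hab t m h
    rw [← ElemQ_pow]
    exact pow_mem h m
  set N : Fin n := ⟨n - 1, by omega⟩ with hN
  set Z : Fin n := ⟨0, by omega⟩ with hZ
  have hNZ : N ≠ Z := Fin.ne_of_val_ne (by simp [hN, hZ]; omega)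
  have h1' : ElemQ N Z hNZ ((k : ℚ)) ∈ Λ := h1
  -- cast facts
  have hkd : (((k * d).toNat : ℕ) : ℚ) = (k : ℚ) * d := by
    have := Int.toNat_of_nonneg (show (0:ℤ) ≤ k * d by positivity)
    exact_mod_cast congrArg (fun z : ℤ => (z : ℚ)) this
  have hdd : ((d.toNat : ℕ) : ℚ) = (d : ℚ) := by
    have := Int.toNat_of_nonneg (show (0:ℤ) ≤ d by omega)
    exact_mod_cast congrArg (fun z : ℤ => (z : ℚ)) this
  have hd2 : ((((d ^ 2).toNat : ℕ)) : ℚ) = (d : ℚ) ^ 2 := by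
    have := Int.toNat_of_nonneg (show (0:ℤ) ≤ d ^ 2 by positivity)
    exact_mod_cast congrArg (fun z : ℤ => (z : ℚ)) this
  intro i j hij
  rcases lt_or_gt_of_ne hij with hlt | hgt
  · -- upper triangular : power of e_{i,j}(d)
    have : ((k * d ^ 2 : ℤ) : ℚ) = (((k * d).toNat : ℕ) : ℚ) * d := by
      rw [hkd]; push_cast; ring
    rw [this]
    exact pow_mem' hij (d : ℚ) _ (h2 i j hlt)
  · -- j < i
    have hjle : (j : ℕ) < (i : ℕ) := hgt
    by_cases hj0 : (j : ℕ) = 0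
    · -- j = Z
      have hjZ : j = Z := Fin.ext (by simp [hZ, hj0])
      subst hjZ
      by_cases hiN : i = N
      · subst hiN
        have : ((k * d ^ 2 : ℤ) : ℚ) = ((((d ^ 2).toNat : ℕ)) : ℚ) * k := by
          rw [hd2]; push_cast; ring
        rw [this]
        exact pow_mem' hij _ _ h1'
      · -- i ≠ N, i ≠ Z : e_{i,Z}(d*k) = [e_{i,N}(d), e_{N,Z}(k)], then power d
        have hiltN : i < N := by
          refine Fin.lt_def.mpr ?_
          have : (i : ℕ) < n := i.isLt
          have : (i : ℕ) ≠ n - 1 := fun h => hiN (Fin.ext (by simp [hN, h]))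
          simp [hN]; omega
        have hiZ : i ≠ Z := hij
        have step1 : ElemQ i Z hiZ ((d : ℚ) * k) ∈ Λ :=
          comm_mem (ne_of_lt hiltN) hNZ hiZ _ _ (h2 i N hiltN) h1'
        have : ((k * d ^ 2 : ℤ) : ℚ) = ((d.toNat : ℕ) : ℚ) * ((d : ℚ) * k) := by
          rw [hdd]; push_cast; ring
        rw [this]
        exact pow_mem' hiZ _ _ step1
    · -- j ≠ Z : 1 ≤ j < i
      have hZj : Z < j := Fin.lt_def.mpr (by simp [hZ]; omega)
      have hZjne : Z ≠ j := ne_of_lt hZj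
      have hUj : ElemQ Z j hZjne ((d : ℚ)) ∈ Λ := h2 Z j hZj
      by_cases hiN : i = N
      · subst hiN
        -- e_{Z,j}(d^2) then [e_{N,Z}(k), e_{Z,j}(d^2)]
        have step1 : ElemQ Z j hZjne (((d.toNat : ℕ) : ℚ) * d) ∈ Λ := pow_mem' hZjne _ _ hUj
        have : ((k * d ^ 2 : ℤ) : ℚ) = (k : ℚ) * (((d.toNat : ℕ) : ℚ) * d) := by
          rw [hdd]; push_cast; ring
        rw [this]
        exact comm_mem hNZ hZjne hij _ _ h1' step1
      · -- i ≠ N, i > j ≥ 1 : e_{i,Z}(d*k) then commutate with e_{Z,j}(d)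
        have hiltN : i < N := by
          refine Fin.lt_def.mpr ?_
          have : (i : ℕ) < n := i.isLt
          have : (i : ℕ) ≠ n - 1 := fun h => hiN (Fin.ext (by simp [hN, h]))
          simp [hN]; omega
        have hiZ : i ≠ Z := Fin.ne_of_val_ne (by simp [hZ]; omega)
        have step1 : ElemQ i Z hiZ ((d : ℚ) * k) ∈ Λ :=
          comm_mem (ne_of_lt hiltN) hNZ hiZ _ _ (h2 i N hiltN) h1'
        have : ((k * d ^ 2 : ℤ) : ℚ) = ((d : ℚ) * k) * d := by push_cast; ring
        rw [this]
        exact comm_mem hiZ hZjne hij _ _ step1 hUj
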